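/- For any nonempty graphs G and H (both having at least one edge), max{p_o(G), p_o(H)} ≤ p_o(G × H) ≤ p_o(G)·p_o(H), where G × H is the direct (tensor) product. -/

import Mathlib

open SimpleGraph

variable {V W : Type*}

/-- The two-step graph: vertices adjacent iff they share a common neighbor in `G`. -/
def SimpleGraph.twoStep (G : SimpleGraph V) : SimpleGraph V where
  Adj u v := u ≠ v ∧ ∃ w, G.Adj w u ∧ G.Adj w v
  symm := ⟨fun u v ⟨h, w, h1, h2⟩ => ⟨h.symm, w, h2, h1⟩⟩
  loopless := ⟨fun u ⟨h, _⟩ => h rfl⟩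

/-- `B` is an open packing: no two distinct vertices of `B` have a common neighbor. -/
def SimpleGraph.IsOpenPacking (G : SimpleGraph V) (B : Set V) : Prop :=
  ∀ u ∈ B, ∀ v ∈ B, u ≠ v → ∀ w, ¬(G.Adj w u ∧ G.Adj w v)

/-- The open packing partition number `p_o(G)`. -/
noncomputable def SimpleGraph.openPackingPartitionNum (G : SimpleGraph V) : ℕ :=
  sInf {k | ∃ f : V → Fin k, ∀ i, G.IsOpenPacking (f ⁻¹' {i})}

/-- `B` is a packing: distinct vertices of `B` have disjoint closed neighborhoods. -/
def SimpleGraph.IsPacking (G : SimpleGraph V) (B : Set V) : Prop :=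
  ∀ u ∈ B, ∀ v ∈ B, u ≠ v → ∀ w, ¬((G.Adj w u ∨ w = u) ∧ (G.Adj w v ∨ w = v))

/-- The 2-distance chromatic number `χ₂(G)`. -/
noncomputable def SimpleGraph.twoDistChromaticNum (G : SimpleGraph V) : ℕ :=
  sInf {k | ∃ f : V → Fin k, ∀ i, G.IsPacking (f ⁻¹' {i})}

/-- The open packing number `ρ_o(G)`. -/
noncomputable def SimpleGraph.openPackingNum (G : SimpleGraph V) [Fintype V] : ℕ :=
  sSup {n | ∃ B : Finset V, G.IsOpenPacking ↑B ∧ B.card = n}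

/-- The direct (tensor) product of graphs. -/
def SimpleGraph.directProd (G : SimpleGraph V) (H : SimpleGraph W) : SimpleGraph (V × W) where
  Adj a b := G.Adj a.1 b.1 ∧ H.Adj a.2 b.2
  symm := ⟨fun _ _ ⟨h1, h2⟩ => ⟨h1.symm, h2.symm⟩⟩
  loopless := ⟨fun a h => G.loopless.irrefl a.1 h.1⟩

/-- The lexicographic product of graphs. -/
def SimpleGraph.lexProd (G : SimpleGraph V) (H : SimpleGraph W) : SimpleGraph (V × W) where
  Adj a b := G.Adj a.1 b.1 ∨ (a.1 = b.1 ∧ H.Adj a.2 b.2)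
  symm := ⟨fun _ _ h => h.elim (fun h => Or.inl h.symm) (fun ⟨he, h⟩ => Or.inr ⟨he.symm, h.symm⟩)⟩
  loopless := ⟨fun a h => h.elim (fun h => G.loopless.irrefl a.1 h) (fun ⟨_, h⟩ => H.loopless.irrefl a.2 h)⟩

lemma exists_op_partition {V : Type*} [Fintype V] (G : SimpleGraph V) :
    {k | ∃ f : V → Fin k, ∀ i, G.IsOpenPacking (f ⁻¹' {i})}.Nonempty :=
  ⟨Fintype.card V, Fintype.equivFin V, fun _ u hu v hv huv _ _ =>
    huv ((Fintype.equivFin V).injective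
      ((Set.mem_singleton_iff.mp hu).trans (Set.mem_singleton_iff.mp hv).symm))⟩

theorem stmt_5 [Fintype V] [Fintype W] (G : SimpleGraph V) (H : SimpleGraph W)
    (hG : ∃ a b, G.Adj a b) (hH : ∃ a b, H.Adj a b) :
    max G.openPackingPartitionNum H.openPackingPartitionNum ≤
        (G.directProd H).openPackingPartitionNum ∧
      (G.directProd H).openPackingPartitionNum ≤
        G.openPackingPartitionNum * H.openPackingPartitionNum := by
  obtain ⟨a0, a1, ha⟩ := hG
  obtain ⟨b0, b1, hb⟩ := hH
  obtain ⟨f, hf⟩ := Nat.sInf_mem (exists_op_partition (G.directProd H))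
  obtain ⟨fG, hfG⟩ := Nat.sInf_mem (exists_op_partition G)
  obtain ⟨fH, hfH⟩ := Nat.sInf_mem (exists_op_partition H)
  constructor
  · apply max_le
    · apply Nat.sInf_le
      refine ⟨fun v => f (v, b0), fun i u hu v hv huv w ⟨h1, h2⟩ => ?_⟩
      exact hf i (u, b0) hu (v, b0) hv (by simp [huv]) (w, b1)
        ⟨⟨h1, hb.symm⟩, ⟨h2, hb.symm⟩⟩
    · apply Nat.sInf_le
      refine ⟨fun w => f (a0, w), fun i u hu v hv huv w ⟨h1, h2⟩ => ?_⟩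
      exact hf i (a0, u) hu (a0, v) hv (by simp [huv]) (a1, w)
        ⟨⟨ha.symm, h1⟩, ⟨ha.symm, h2⟩⟩
  · apply Nat.sInf_le
    refine ⟨fun p => finProdFinEquiv (fG p.1, fH p.2), fun i p hp q hq hpq w ⟨h1, h2⟩ => ?_⟩
    have key : fG p.1 = fG q.1 ∧ fH p.2 = fH q.2 := by
      have := finProdFinEquiv.injective
        ((Set.mem_singleton_iff.mp hp).trans (Set.mem_singleton_iff.mp hq).symm)
      exact ⟨congrArg Prod.fst this, congrArg Prod.snd this⟩
    by_cases h : p.1 = q.1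
    · have h2' : p.2 ≠ q.2 := fun h2' => hpq (Prod.ext h h2')
      exact hfH (fH p.2) p.2 rfl q.2 key.2.symm h2' w.2 ⟨h1.2, h2.2⟩
    · exact hfG (fG p.1) p.1 rfl q.1 key.1.symm h w.1 ⟨h1.1, h2.1⟩
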